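/- If η is a Gibbs process with Papangelou intensity κ and B is measurable with η(B) < ∞ almost surely, then E[Z_B(η)] = E[2^{η(B)}]. -/

import Mathlib

open MeasureTheory ENNReal

attribute [local instance] Classical.propDecidable

namespace Gibbs

variable {X : Type*} [MeasurableSpace X]

noncomputable def diracSum (l : List X) : Measure X :=
  (l.map fun x => Measure.dirac x).sum

noncomputable def diracSumFin {m : ℕ} (v : Fin m → X) : Measure X :=
  ∑ i, Measure.dirac (v i)

noncomputable def kappaList (κ : X → Measure X → ℝ≥0∞) : List X → Measure X → ℝ≥0∞
  | [], _ => 1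
  | x :: l, μ => κ x (μ + diracSum l) * kappaList κ l μ

noncomputable def kappaFin (κ : X → Measure X → ℝ≥0∞) {m : ℕ}
    (v : Fin m → X) (μ : Measure X) : ℝ≥0∞ :=
  kappaList κ (List.ofFn v) μ

def Cocycle (κ : X → Measure X → ℝ≥0∞) : Prop :=
  ∀ (x y : X) (μ : Measure X),
    κ x μ * κ y (μ + Measure.dirac x) = κ y μ * κ x (μ + Measure.dirac y)

def IsLocalization (Bseq : ℕ → Set X) : Prop :=
  Monotone Bseq ∧ (∀ j, MeasurableSet (Bseq j)) ∧ (⋃ j, Bseq j) = Set.univ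

def IsCounting (Bseq : ℕ → Set X) (μ : Measure X) : Prop :=
  ∀ j, ∃ n : ℕ, μ (Bseq j) = n

structure IsFactorial (fact : Measure X → (m : ℕ) → Measure (Fin m → X)) : Prop where
  one : ∀ μ : Measure X, fact μ 1 = Measure.map (fun x => (fun _ : Fin 1 => x)) μ
  symm : ∀ (μ : Measure X) (m : ℕ) (σ : Equiv.Perm (Fin m)),
    Measure.map (fun v => v ∘ σ) (fact μ m) = fact μ m
  recur : ∀ (μ : Measure X) (m : ℕ) (A : Set (Fin (m + 1) → X)), MeasurableSet A →
    fact μ (m + 1) A =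
      ∫⁻ v, (μ {x | Fin.snoc v x ∈ A}
        - ∑ j : Fin m, Set.indicator A (fun _ => (1 : ℝ≥0∞)) (Fin.snoc v (v j))) ∂ fact μ m

noncomputable def enat (c : ℝ≥0∞) : ℕ := ⌊c.toReal⌋₊

noncomputable def elog (c : ℝ≥0∞) : EReal :=
  if c = 0 then ⊥ else if c = ⊤ then ⊤ else ((Real.log c.toReal : ℝ) : EReal)

noncomputable def eexp (x : EReal) : ℝ≥0∞ :=
  if x = ⊥ then 0 else if x = ⊤ then ⊤ else ENNReal.ofReal (Real.exp x.toReal)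

noncomputable def hamiltonian (κ : X → Measure X → ℝ≥0∞)
    (fact : Measure X → (m : ℕ) → Measure (Fin m → X)) (μ ψ : Measure X) : EReal :=
  if μ Set.univ = 0 then 0
  else if μ Set.univ = ⊤ then ⊤
  else - elog ((((enat (μ Set.univ)).factorial : ℝ≥0∞))⁻¹ *
    ∫⁻ v : Fin (enat (μ Set.univ)) → X, kappaFin κ v ψ ∂ fact μ (enat (μ Set.univ)))

noncomputable def partitionZ (κ : X → Measure X → ℝ≥0∞) (lam : Measure X)
    (B : Set X) (ψ : Measure X) : ℝ≥0∞ :=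
  1 + ∑' m : ℕ, (((m + 1).factorial : ℝ≥0∞))⁻¹ *
    ∫⁻ v : Fin (m + 1) → X, kappaFin κ v ψ ∂(Measure.pi fun _ : Fin (m + 1) => lam.restrict B)

noncomputable def kernelRestrict (κ : X → Measure X → ℝ≥0∞) (C : Set X) (ψ : Measure X) :
    X → Measure X → ℝ≥0∞ :=
  fun x μ => κ x (ψ + μ) * Set.indicator C (fun _ => (1 : ℝ≥0∞)) x

lemma diracSum_nil : diracSum ([] : List X) = 0 := by simp [diracSum]

lemma diracSum_cons (x : X) (l : List X) :
    diracSum (x :: l) = Measure.dirac x + diracSum l := by simp [diracSum]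

lemma diracSum_concat (l : List X) (x : X) :
    diracSum (l ++ [x]) = diracSum l + Measure.dirac x := by
  induction l with
  | nil => simp [diracSum_nil, diracSum_cons]
  | cons y l ih => simp [diracSum_cons, ih, add_assoc]

lemma kappaList_concat (κ : X → Measure X → ℝ≥0∞) (l : List X) (x : X) (μ : Measure X) :
    kappaList κ (l ++ [x]) μ = kappaList κ l (μ + Measure.dirac x) * κ x μ := by
  induction l generalizing μ with
  | nil => simp [kappaList, diracSum_nil]
  | cons y l ih =>
      show κ y (μ + diracSum (l ++ [x])) * kappaList κ (l ++ [x]) μ = _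
      rw [ih, diracSum_concat]
      show _ = κ y (μ + Measure.dirac x + diracSum l) * kappaList κ l (μ + Measure.dirac x) * κ x μ
      rw [← add_assoc, add_right_comm μ (diracSum l) (Measure.dirac x), mul_assoc]

lemma kappaFin_snoc (κ : X → Measure X → ℝ≥0∞) {m : ℕ} (w : Fin m → X) (x : X)
    (μ : Measure X) :
    kappaFin κ (Fin.snoc w x) μ = kappaFin κ w (μ + Measure.dirac x) * κ x μ := by
  have h : List.ofFn (Fin.snoc w x : Fin (m+1) → X) = List.ofFn w ++ [x] := by
    rw [List.ofFn_succ']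
    simp [List.concat_eq_append]
  rw [kappaFin, h, kappaList_concat]
  rfl

lemma diracSum_apply (l : List X) {s : Set X} (hs : MeasurableSet s) :
    diracSum l s = (l.map fun x => Set.indicator s (1 : X → ℝ≥0∞) x).sum := by
  induction l with
  | nil => simp [diracSum_nil]
  | cons y l ih =>
      rw [diracSum_cons]
      rw [Measure.add_apply, Measure.dirac_apply' _ hs, ih, List.map_cons, List.sum_cons]

lemma diracSum_ofFn_apply {m : ℕ} (w : Fin m → X) {s : Set X} (hs : MeasurableSet s) :
    diracSum (List.ofFn w) s = ∑ i, Set.indicator s (1 : X → ℝ≥0∞) (w i) := by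
  rw [diracSum_apply _ hs, List.map_ofFn, List.sum_ofFn]
  rfl

lemma measurable_measure_add {α : Type*} [MeasurableSpace α] {f g : α → Measure X}
    (hf : Measurable f) (hg : Measurable g) : Measurable fun a => f a + g a := by
  refine Measure.measurable_of_measurable_coe _ fun s hs => ?_
  simp only [Measure.add_apply]
  exact ((Measure.measurable_coe hs).comp hf).add ((Measure.measurable_coe hs).comp hg)

lemma measurable_diracSum_ofFn (m : ℕ) :
    Measurable fun w : Fin m → X => diracSum (List.ofFn w) := by
  refine Measure.measurable_of_measurable_coe _ fun s hs => ?_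
  simp_rw [diracSum_ofFn_apply _ hs]
  exact Finset.measurable_sum _ fun i _ =>
    (measurable_const.indicator hs).comp (measurable_pi_apply i)

lemma measurable_kappaFin {κ : X → Measure X → ℝ≥0∞}
    (hκ : Measurable fun p : X × Measure X => κ p.1 p.2) :
    ∀ m : ℕ, Measurable fun p : (Fin m → X) × Measure X => kappaFin κ p.1 p.2 := by
  intro m
  induction m with
  | zero =>
      have : (fun p : (Fin 0 → X) × Measure X => kappaFin κ p.1 p.2) = fun _ => 1 := by
        funext p
        simp [kappaFin, List.ofFn_zero, kappaList]
      rw [this]; exact measurable_const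
  | succ m ih =>
      have heq : (fun p : (Fin (m+1) → X) × Measure X => kappaFin κ p.1 p.2)
          = fun p => κ (p.1 0) (p.2 + diracSum (List.ofFn (p.1 ∘ Fin.succ)))
              * kappaFin κ (p.1 ∘ Fin.succ) p.2 := by
        funext p
        rw [kappaFin, List.ofFn_succ]
        rfl
      rw [heq]
      have hm1 : Measurable fun p : (Fin (m+1) → X) × Measure X => p.1 ∘ Fin.succ := by
        exact measurable_pi_iff.2 fun i => (measurable_pi_apply _).comp measurable_fst
      refine Measurable.mul ?_ (ih.comp (hm1.prodMk measurable_snd))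
      refine hκ.comp (Measurable.prodMk ?_ ?_)
      · exact (measurable_pi_apply 0).comp measurable_fst
      · exact measurable_measure_add measurable_snd
          ((measurable_diracSum_ofFn m).comp hm1)


lemma measurable_kappaFin_left {κ : X → Measure X → ℝ≥0∞}
    (hκ : Measurable fun p : X × Measure X => κ p.1 p.2) (m : ℕ) (ψ : Measure X) :
    Measurable fun v : Fin m → X => kappaFin κ v ψ :=
  (measurable_kappaFin hκ m).comp (measurable_id.prodMk measurable_const)

lemma measurable_kappaFin_right {κ : X → Measure X → ℝ≥0∞}
    (hκ : Measurable fun p : X × Measure X => κ p.1 p.2) {m : ℕ} (w : Fin m → X) :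
    Measurable fun ψ : Measure X => kappaFin κ w ψ :=
  (measurable_kappaFin hκ m).comp (measurable_const.prodMk measurable_id)

lemma measurable_snoc (m : ℕ) :
    Measurable fun p : X × (Fin m → X) => (Fin.snoc p.2 p.1 : Fin (m+1) → X) := by
  refine measurable_pi_iff.2 fun i => ?_
  induction i using Fin.lastCases with
  | last => simp only [Fin.snoc_last]; exact measurable_fst
  | cast j => simp only [Fin.snoc_castSucc]; exact (measurable_pi_apply j).comp measurable_snd

lemma hsplit (κ : X → Measure X → ℝ≥0∞)
    (hκmeas : Measurable fun p : X × Measure X => κ p.1 p.2)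
    (ν : Measure X) [SigmaFinite ν] (m : ℕ) (ψ : Measure X) :
    ∫⁻ v : Fin (m+1) → X, kappaFin κ v ψ ∂(Measure.pi fun _ : Fin (m+1) => ν)
      = ∫⁻ w : Fin m → X, ∫⁻ x, kappaFin κ w (ψ + Measure.dirac x) * κ x ψ ∂ν
          ∂(Measure.pi fun _ : Fin m => ν) := by
  have hmp := measurePreserving_piFinSuccAbove (fun _ : Fin (m+1) => ν) (Fin.last m)
  have hGmeas : Measurable fun p : X × (Fin m → X) => kappaFin κ (Fin.snoc p.2 p.1) ψ :=
    (measurable_kappaFin_left hκmeas (m+1) ψ).comp (measurable_snoc m)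
  have h1 : ∫⁻ v : Fin (m+1) → X, kappaFin κ v ψ ∂(Measure.pi fun _ : Fin (m+1) => ν)
      = ∫⁻ p : X × (Fin m → X), kappaFin κ (Fin.snoc p.2 p.1) ψ
          ∂(ν.prod (Measure.pi fun _ : Fin m => ν)) := by
    rw [← hmp.map_eq, lintegral_map hGmeas (MeasurableEquiv.measurable _)]
    refine lintegral_congr fun v => ?_
    congr 1
    have h2 : (fun j : Fin m => v ((Fin.last m).succAbove j)) = Fin.init v := by
      funext j; rw [Fin.succAbove_last]; rfl
    refine (?_ : Fin.snoc _ _ = v).symm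
    show Fin.snoc (fun j : Fin m => v ((Fin.last m).succAbove j)) (v (Fin.last m)) = v
    rw [h2, Fin.snoc_init_self]
  rw [h1, lintegral_prod_symm _ hGmeas.aemeasurable]
  refine lintegral_congr fun w => lintegral_congr fun x => ?_
  exact kappaFin_snoc κ w x ψ

lemma T_step {Ω : Type*} [MeasurableSpace Ω] (P : Measure Ω) [IsProbabilityMeasure P]
    (lam : Measure X) [SigmaFinite lam]
    (κ : X → Measure X → ℝ≥0∞)
    (hκmeas : Measurable fun p : X × Measure X => κ p.1 p.2)
    (η : Ω → Measure X) (hηmeas : Measurable η)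
    (hGNZ : ∀ f : X → Measure X → ℝ≥0∞,
      Measurable (fun p : X × Measure X => f p.1 p.2) →
      ∫⁻ ω, ∫⁻ x, f x (η ω) ∂(η ω) ∂P
        = ∫⁻ ω, ∫⁻ x, f x (η ω + Measure.dirac x) * κ x (η ω) ∂lam ∂P)
    (B : Set X) (hB : MeasurableSet B)
    (m : ℕ) (g : ℝ≥0∞ → ℝ≥0∞) (hg : Measurable g) :
    ∫⁻ ω, g (η ω B) * ∫⁻ v : Fin (m+1) → X, kappaFin κ v (η ω)
        ∂(Measure.pi fun _ : Fin (m+1) => lam.restrict B) ∂P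
      = ∫⁻ ω, (η ω B * g (η ω B - 1)) * ∫⁻ v : Fin m → X, kappaFin κ v (η ω)
        ∂(Measure.pi fun _ : Fin m => lam.restrict B) ∂P := by
  set ν := lam.restrict B with hνdef
  have hmeasB : Measurable fun ω => η ω B := (Measure.measurable_coe hB).comp hηmeas
  have hsub1 : Measurable fun c : ℝ≥0∞ => c - 1 := measurable_id.sub measurable_const
  -- measurable inner (w, x) integrand for fixed ψ handled pointwise below
  have hker : ∀ ψ : Measure X, Measurable fun p : (Fin m → X) × X =>
      kappaFin κ p.1 (ψ + Measure.dirac p.2) * κ p.2 ψ := by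
    intro ψ
    refine Measurable.mul ?_ (hκmeas.comp (measurable_snd.prodMk measurable_const))
    exact (measurable_kappaFin hκmeas m).comp
      (measurable_fst.prodMk
        (measurable_measure_add measurable_const (Measure.measurable_dirac.comp measurable_snd)))
  have step1 : ∫⁻ ω, g (η ω B) * ∫⁻ v : Fin (m+1) → X, kappaFin κ v (η ω)
        ∂(Measure.pi fun _ : Fin (m+1) => ν) ∂P
      = ∫⁻ ω, ∫⁻ w : Fin m → X, ∫⁻ x,
          g (η ω B) * (kappaFin κ w (η ω + Measure.dirac x) * κ x (η ω)) ∂ν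
          ∂(Measure.pi fun _ : Fin m => ν) ∂P := by
    refine lintegral_congr fun ω => ?_
    rw [hsplit κ hκmeas ν m (η ω)]
    have hwmeas : Measurable fun w : Fin m → X =>
        ∫⁻ x, kappaFin κ w (η ω + Measure.dirac x) * κ x (η ω) ∂ν :=
      Measurable.lintegral_prod_right' (hker (η ω))
    rw [← lintegral_const_mul _ hwmeas]
    refine lintegral_congr fun w => ?_
    have hxmeas : Measurable fun x : X =>
        kappaFin κ w (η ω + Measure.dirac x) * κ x (η ω) :=
      (hker (η ω)).comp (measurable_const.prodMk measurable_id)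
    rw [← lintegral_const_mul _ hxmeas]
  have hbig : Measurable fun q : (Ω × (Fin m → X)) × X =>
      g (η q.1.1 B) * (kappaFin κ q.1.2 (η q.1.1 + Measure.dirac q.2) * κ q.2 (η q.1.1)) := by
    have hη1 : Measurable fun q : (Ω × (Fin m → X)) × X => η q.1.1 :=
      hηmeas.comp (measurable_fst.comp measurable_fst)
    refine Measurable.mul (hg.comp ((Measure.measurable_coe hB).comp hη1)) ?_
    refine Measurable.mul ?_ (hκmeas.comp (measurable_snd.prodMk hη1))
    exact (measurable_kappaFin hκmeas m).comp
      ((measurable_snd.comp measurable_fst).prodMk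
        (measurable_measure_add hη1 (Measure.measurable_dirac.comp measurable_snd)))
  have step2 : ∫⁻ ω, ∫⁻ w : Fin m → X, ∫⁻ x,
          g (η ω B) * (kappaFin κ w (η ω + Measure.dirac x) * κ x (η ω)) ∂ν
          ∂(Measure.pi fun _ : Fin m => ν) ∂P
      = ∫⁻ w : Fin m → X, ∫⁻ ω, ∫⁻ x,
          g (η ω B) * (kappaFin κ w (η ω + Measure.dirac x) * κ x (η ω)) ∂ν
          ∂P ∂(Measure.pi fun _ : Fin m => ν) := by
    exact lintegral_lintegral_swap (Measurable.lintegral_prod_right' hbig).aemeasurable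
  have stepGNZ : ∀ w : Fin m → X,
      ∫⁻ ω, ∫⁻ x, g (η ω B) * (kappaFin κ w (η ω + Measure.dirac x) * κ x (η ω)) ∂ν ∂P
      = ∫⁻ ω, η ω B * (g (η ω B - 1) * kappaFin κ w (η ω)) ∂P := by
    intro w
    set f : X → Measure X → ℝ≥0∞ := fun x μ =>
      Set.indicator B (1 : X → ℝ≥0∞) x * (g (μ B - 1) * kappaFin κ w μ) with hfdef
    have hfmeas : Measurable fun p : X × Measure X => f p.1 p.2 := by
      refine Measurable.mul ((measurable_const.indicator hB).comp measurable_fst) ?_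
      refine Measurable.mul (hg.comp (hsub1.comp ((Measure.measurable_coe hB).comp measurable_snd))) ?_
      exact (measurable_kappaFin_right hκmeas w).comp measurable_snd
    have hgnz := hGNZ f hfmeas
    have hL : ∫⁻ ω, ∫⁻ x, f x (η ω) ∂(η ω) ∂P
        = ∫⁻ ω, η ω B * (g (η ω B - 1) * kappaFin κ w (η ω)) ∂P := by
      refine lintegral_congr fun ω => ?_
      have : ∀ x, f x (η ω) =
          Set.indicator B (fun _ => g (η ω B - 1) * kappaFin κ w (η ω)) x := by
        intro x
        by_cases hx : x ∈ B <;>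
          simp [hfdef, Set.indicator_of_mem, Set.indicator_of_notMem, hx]
      rw [lintegral_congr this, lintegral_indicator_const hB, mul_comm]
    have hR : ∫⁻ ω, ∫⁻ x, f x (η ω + Measure.dirac x) * κ x (η ω) ∂lam ∂P
        = ∫⁻ ω, ∫⁻ x, g (η ω B) * (kappaFin κ w (η ω + Measure.dirac x) * κ x (η ω)) ∂ν ∂P := by
      refine lintegral_congr fun ω => ?_
      have hpt : ∀ x, f x (η ω + Measure.dirac x) * κ x (η ω)
          = Set.indicator B (fun x =>
              g (η ω B) * (kappaFin κ w (η ω + Measure.dirac x) * κ x (η ω))) x := by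
        intro x
        by_cases hx : x ∈ B
        · have hd : (η ω + Measure.dirac x) B = η ω B + 1 := by
            rw [Measure.add_apply, Measure.dirac_apply' _ hB, Set.indicator_of_mem hx]
            rfl
          rw [Set.indicator_of_mem hx, hfdef]
          simp only [Set.indicator_of_mem hx, Pi.one_apply, one_mul, hd,
            ENNReal.add_sub_cancel_right one_ne_top]
          ring
        · rw [Set.indicator_of_notMem hx, hfdef]
          simp [Set.indicator_of_notMem hx]
      rw [lintegral_congr hpt, lintegral_indicator hB]
    rw [← hL, hgnz, hR]
  have step3 : ∫⁻ w : Fin m → X, ∫⁻ ω,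
        η ω B * (g (η ω B - 1) * kappaFin κ w (η ω)) ∂P ∂(Measure.pi fun _ : Fin m => ν)
      = ∫⁻ ω, ∫⁻ w : Fin m → X,
        η ω B * (g (η ω B - 1) * kappaFin κ w (η ω)) ∂(Measure.pi fun _ : Fin m => ν) ∂P := by
    refine (lintegral_lintegral_swap ?_).symm
    refine Measurable.aemeasurable ?_
    refine Measurable.mul ((Measure.measurable_coe hB).comp (hηmeas.comp measurable_fst)) ?_
    refine Measurable.mul
      (hg.comp (hsub1.comp ((Measure.measurable_coe hB).comp (hηmeas.comp measurable_fst)))) ?_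
    exact (measurable_kappaFin hκmeas m).comp
      (measurable_snd.prodMk (hηmeas.comp measurable_fst))
  have step4 : ∀ ω, ∫⁻ w : Fin m → X,
        η ω B * (g (η ω B - 1) * kappaFin κ w (η ω)) ∂(Measure.pi fun _ : Fin m => ν)
      = (η ω B * g (η ω B - 1)) * ∫⁻ v : Fin m → X, kappaFin κ v (η ω)
          ∂(Measure.pi fun _ : Fin m => ν) := by
    intro ω
    rw [← lintegral_const_mul _ (measurable_kappaFin_left hκmeas m (η ω))]
    refine lintegral_congr fun w => ?_
    ring
  calc ∫⁻ ω, g (η ω B) * ∫⁻ v : Fin (m+1) → X, kappaFin κ v (η ω)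
        ∂(Measure.pi fun _ : Fin (m+1) => ν) ∂P
      = ∫⁻ w : Fin m → X, ∫⁻ ω, ∫⁻ x,
          g (η ω B) * (kappaFin κ w (η ω + Measure.dirac x) * κ x (η ω)) ∂ν
          ∂P ∂(Measure.pi fun _ : Fin m => ν) := by rw [step1, step2]
    _ = ∫⁻ w : Fin m → X, ∫⁻ ω,
          η ω B * (g (η ω B - 1) * kappaFin κ w (η ω)) ∂P ∂(Measure.pi fun _ : Fin m => ν) :=
        lintegral_congr stepGNZ
    _ = ∫⁻ ω, (η ω B * g (η ω B - 1)) * ∫⁻ v : Fin m → X, kappaFin κ v (η ω)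
          ∂(Measure.pi fun _ : Fin m => ν) ∂P := by
        rw [step3]; exact lintegral_congr fun ω => step4 ω


lemma measurable_K {κ : X → Measure X → ℝ≥0∞}
    (hκmeas : Measurable fun p : X × Measure X => κ p.1 p.2)
    (ν : Measure X) [SigmaFinite ν] (m : ℕ) :
    Measurable fun ψ : Measure X =>
      ∫⁻ v : Fin m → X, kappaFin κ v ψ ∂(Measure.pi fun _ : Fin m => ν) :=
  Measurable.lintegral_prod_right ((measurable_kappaFin hκmeas m).comp measurable_swap)

lemma T_formula {Ω : Type*} [MeasurableSpace Ω] (P : Measure Ω) [IsProbabilityMeasure P]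
    (lam : Measure X) [SigmaFinite lam]
    (κ : X → Measure X → ℝ≥0∞)
    (hκmeas : Measurable fun p : X × Measure X => κ p.1 p.2)
    (η : Ω → Measure X) (hηmeas : Measurable η)
    (hGNZ : ∀ f : X → Measure X → ℝ≥0∞,
      Measurable (fun p : X × Measure X => f p.1 p.2) →
      ∫⁻ ω, ∫⁻ x, f x (η ω) ∂(η ω) ∂P
        = ∫⁻ ω, ∫⁻ x, f x (η ω + Measure.dirac x) * κ x (η ω) ∂lam ∂P)
    (B : Set X) (hB : MeasurableSet B) :
    ∀ (m : ℕ) (g : ℝ≥0∞ → ℝ≥0∞), Measurable g →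
    ∫⁻ ω, g (η ω B) * ∫⁻ v : Fin m → X, kappaFin κ v (η ω)
        ∂(Measure.pi fun _ : Fin m => lam.restrict B) ∂P
      = ∫⁻ ω, (∏ k ∈ Finset.range m, (η ω B - (k : ℝ≥0∞))) * g (η ω B - (m : ℝ≥0∞)) ∂P := by
  intro m
  induction m with
  | zero =>
      intro g hg
      have hone : ∀ ψ : Measure X, ∫⁻ v : Fin 0 → X, kappaFin κ v ψ
          ∂(Measure.pi fun _ : Fin 0 => lam.restrict B) = 1 := by
        intro ψ
        have h0 : (fun v : Fin 0 → X => kappaFin κ v ψ) = fun _ => 1 := by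
          funext v; simp [kappaFin, List.ofFn_zero, kappaList]
        rw [h0, lintegral_const, Measure.pi_univ]
        simp
      refine lintegral_congr fun ω => ?_
      rw [hone]
      simp
  | succ m ih =>
      intro g hg
      rw [T_step P lam κ hκmeas η hηmeas hGNZ B hB m g hg]
      have hg' : Measurable fun n : ℝ≥0∞ => n * g (n - 1) :=
        measurable_id.mul (hg.comp (measurable_id.sub measurable_const))
      have h2 := ih (fun n : ℝ≥0∞ => n * g (n - 1)) hg'
      rw [h2]
      refine lintegral_congr fun ω => ?_
      have harg : η ω B - (m : ℝ≥0∞) - 1 = η ω B - ((m+1 : ℕ) : ℝ≥0∞) := by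
        rw [tsub_tsub, Nat.cast_add, Nat.cast_one]
      rw [Finset.prod_range_succ, mul_assoc, harg]

lemma eta_nat {Ω : Type*} [MeasurableSpace Ω] (P : Measure Ω) [IsProbabilityMeasure P]
    (lam : Measure X)
    (κ : X → Measure X → ℝ≥0∞)
    (η : Ω → Measure X) (hηmeas : Measurable η)
    (hGNZ : ∀ f : X → Measure X → ℝ≥0∞,
      Measurable (fun p : X × Measure X => f p.1 p.2) →
      ∫⁻ ω, ∫⁻ x, f x (η ω) ∂(η ω) ∂P
        = ∫⁻ ω, ∫⁻ x, f x (η ω + Measure.dirac x) * κ x (η ω) ∂lam ∂P)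
    (B : Set X) (hB : MeasurableSet B) (hfinB : ∀ᵐ ω ∂P, η ω B < ⊤) :
    ∀ᵐ ω ∂P, ∃ n : ℕ, η ω B = n := by
  have hmeasB : Measurable fun ω => η ω B := (Measure.measurable_coe hB).comp hηmeas
  have main : ∀ k : ℕ, (∀ᵐ ω ∂P, η ω B + 1 ∉ Set.Ioo (k : ℝ≥0∞) ((k : ℝ≥0∞)+1)) →
      ∀ᵐ ω ∂P, η ω B ∉ Set.Ioo (k : ℝ≥0∞) ((k : ℝ≥0∞)+1) := by
    intro k hk
    set A : Set ℝ≥0∞ := Set.Ioo (k : ℝ≥0∞) ((k : ℝ≥0∞)+1) with hAdef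
    have hAm : MeasurableSet A := measurableSet_Ioo
    set f : X → Measure X → ℝ≥0∞ := fun x μ =>
      Set.indicator B (1 : X → ℝ≥0∞) x * Set.indicator A (fun _ => (1 : ℝ≥0∞)) (μ B)
      with hfdef
    have hfmeas : Measurable fun p : X × Measure X => f p.1 p.2 := by
      refine Measurable.mul ((measurable_const.indicator hB).comp measurable_fst) ?_
      exact (measurable_const.indicator hAm).comp
        ((Measure.measurable_coe hB).comp measurable_snd)
    have hgnz := hGNZ f hfmeas
    have hL : ∫⁻ ω, ∫⁻ x, f x (η ω) ∂(η ω) ∂P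
        = ∫⁻ ω, Set.indicator A (fun _ => (1 : ℝ≥0∞)) (η ω B) * η ω B ∂P := by
      refine lintegral_congr fun ω => ?_
      have hpt : ∀ x, f x (η ω) = Set.indicator B
          (fun _ => Set.indicator A (fun _ => (1 : ℝ≥0∞)) (η ω B)) x := by
        intro x
        by_cases hx : x ∈ B <;>
          simp [hfdef, Set.indicator_of_mem, Set.indicator_of_notMem, hx]
      rw [lintegral_congr hpt, lintegral_indicator_const hB]
    have hR : ∫⁻ ω, ∫⁻ x, f x (η ω + Measure.dirac x) * κ x (η ω) ∂lam ∂P = 0 := by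
      have hz : ∀ᵐ ω ∂P, ∫⁻ x, f x (η ω + Measure.dirac x) * κ x (η ω) ∂lam = 0 := by
        filter_upwards [hk] with ω hω
        have hzero : ∀ x, f x (η ω + Measure.dirac x) * κ x (η ω) = 0 := by
          intro x
          by_cases hx : x ∈ B
          · have hd : (η ω + Measure.dirac x) B = η ω B + 1 := by
              rw [Measure.add_apply, Measure.dirac_apply' _ hB, Set.indicator_of_mem hx]
              rfl
            simp [hfdef, hd, Set.indicator_of_notMem hω]
          · simp [hfdef, Set.indicator_of_notMem hx]
        simp [hzero]
      calc ∫⁻ ω, ∫⁻ x, f x (η ω + Measure.dirac x) * κ x (η ω) ∂lam ∂P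
          = ∫⁻ ω, (0 : ℝ≥0∞) ∂P := lintegral_congr_ae hz
        _ = 0 := lintegral_zero
    have hzero2 : ∫⁻ ω, Set.indicator A (fun _ => (1 : ℝ≥0∞)) (η ω B) * η ω B ∂P = 0 := by
      rw [← hL, hgnz, hR]
    have hmeas2 : Measurable fun ω => Set.indicator A (fun _ => (1 : ℝ≥0∞)) (η ω B) * η ω B :=
      ((measurable_const.indicator hAm).comp hmeasB).mul hmeasB
    have hae := (lintegral_eq_zero_iff hmeas2).1 hzero2
    filter_upwards [hae] with ω hω hmem
    have h1 : Set.indicator A (fun _ => (1 : ℝ≥0∞)) (η ω B) * η ω B = 0 := hω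
    rw [Set.indicator_of_mem hmem, one_mul] at h1
    have : (k : ℝ≥0∞) < η ω B := hmem.1
    simp [h1] at this
  have hall : ∀ k : ℕ, ∀ᵐ ω ∂P, η ω B ∉ Set.Ioo (k : ℝ≥0∞) ((k : ℝ≥0∞)+1) := by
    intro k
    induction k with
    | zero =>
        refine main 0 ?_
        refine Filter.Eventually.of_forall fun ω h => ?_
        have h2 := h.2
        rw [Nat.cast_zero, zero_add] at h2
        exact absurd h2 (by simpa using (le_add_self : 1 ≤ η ω B + 1).not_lt)
    | succ k ihk =>
        refine main (k+1) ?_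
        filter_upwards [ihk] with ω hω hmem
        refine hω ⟨?_, ?_⟩
        · have h1 := hmem.1
          rw [Nat.cast_add, Nat.cast_one] at h1
          exact (ENNReal.add_lt_add_iff_right one_ne_top).1 h1
        · have h2 := hmem.2
          rw [Nat.cast_add, Nat.cast_one] at h2
          exact (ENNReal.add_lt_add_iff_right one_ne_top).1 h2
  have hAll := ae_all_iff.2 hall
  filter_upwards [hAll, hfinB] with ω hω hfin
  set c := η ω B with hc
  have hfin' : c ≠ ⊤ := hfin.ne
  set n := ⌊c.toReal⌋₊ with hn
  refine ⟨n, ?_⟩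
  by_contra hne
  have h1 : (n : ℝ≥0∞) ≤ c := by
    rw [← ENNReal.ofReal_toReal hfin', ← ENNReal.ofReal_natCast n]
    exact ENNReal.ofReal_le_ofReal (Nat.floor_le ENNReal.toReal_nonneg)
  have h2 : c < (n : ℝ≥0∞) + 1 := by
    rw [← ENNReal.ofReal_toReal hfin']
    have : ((n : ℝ≥0∞) + 1) = ENNReal.ofReal ((n : ℝ) + 1) := by
      rw [ENNReal.ofReal_add (by positivity) zero_le_one]
      simp [ENNReal.ofReal_natCast, ENNReal.ofReal_one]
    rw [this]
    exact (ENNReal.ofReal_lt_ofReal_iff (by positivity)).2 (Nat.lt_floor_add_one _)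
  exact hω n ⟨lt_of_le_of_ne h1 (Ne.symm hne), h2⟩

lemma key_sum (n : ℕ) :
    1 + ∑' m : ℕ, (((m + 1).factorial : ℝ≥0∞))⁻¹ *
        ∏ k ∈ Finset.range (m+1), ((n : ℝ≥0∞) - (k : ℝ≥0∞)) = 2 ^ n := by
  have hprod : ∀ j : ℕ, (∏ k ∈ Finset.range j, ((n : ℝ≥0∞) - (k : ℝ≥0∞)))
      = ((n.descFactorial j : ℕ) : ℝ≥0∞) := by
    intro j
    rw [Nat.descFactorial_eq_prod_range, Nat.cast_prod]
    exact Finset.prod_congr rfl fun k _ => (ENNReal.natCast_sub n k).symm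
  have hterm : ∀ m : ℕ, (((m + 1).factorial : ℝ≥0∞))⁻¹ * ((n.descFactorial (m+1) : ℕ) : ℝ≥0∞)
      = ((n.choose (m+1) : ℕ) : ℝ≥0∞) := by
    intro m
    have hne : ((m+1).factorial : ℝ≥0∞) ≠ 0 := Nat.cast_ne_zero.2 (m+1).factorial_ne_zero
    rw [Nat.descFactorial_eq_factorial_mul_choose, Nat.cast_mul, ← mul_assoc,
      ENNReal.inv_mul_cancel hne (ENNReal.natCast_ne_top _), one_mul]
  have h1 : ∑' m : ℕ, (((m + 1).factorial : ℝ≥0∞))⁻¹ *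
        ∏ k ∈ Finset.range (m+1), ((n : ℝ≥0∞) - (k : ℝ≥0∞))
      = ∑' m : ℕ, ((n.choose (m+1) : ℕ) : ℝ≥0∞) := by
    refine tsum_congr fun m => ?_
    rw [hprod (m+1), hterm m]
  have h2 : ∑' m : ℕ, ((n.choose (m+1) : ℕ) : ℝ≥0∞)
      = ((∑ m ∈ Finset.range n, n.choose (m+1) : ℕ) : ℝ≥0∞) := by
    rw [Nat.cast_sum]
    refine tsum_eq_sum ?_
    intro j hj
    have hlt : n < j + 1 := by
      by_contra h
      exact hj (Finset.mem_range.2 (by omega))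
    rw [Nat.choose_eq_zero_of_lt hlt, Nat.cast_zero]
  rw [h1, h2]
  have h3 : 1 + (∑ m ∈ Finset.range n, n.choose (m+1)) = 2 ^ n := by
    have h4 := Nat.sum_range_choose n
    rw [Finset.sum_range_succ', Nat.choose_zero_right] at h4
    omega
  calc (1 : ℝ≥0∞) + ((∑ m ∈ Finset.range n, n.choose (m+1) : ℕ) : ℝ≥0∞)
      = ((1 + ∑ m ∈ Finset.range n, n.choose (m+1) : ℕ) : ℝ≥0∞) := by push_cast; ring
    _ = ((2 ^ n : ℕ) : ℝ≥0∞) := by rw [h3]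
    _ = 2 ^ n := by push_cast; ring


theorem expectation_partitionZ_eq_expectation_two_pow
    {Ω : Type*} [MeasurableSpace Ω] (P : Measure Ω) [IsProbabilityMeasure P]
    (Bseq : ℕ → Set X) (hloc : IsLocalization Bseq)
    (lam : Measure X) (hlam : ∀ j, lam (Bseq j) ≠ ⊤)
    (κ : X → Measure X → ℝ≥0∞)
    (hκmeas : Measurable fun p : X × Measure X => κ p.1 p.2)
    (hκfin : ∀ (x : X) (μ : Measure X), κ x μ ≠ ⊤)
    (hcoc : Cocycle κ)
    (η : Ω → Measure X) (hηmeas : Measurable η)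
    (hcount : ∀ ω, IsCounting Bseq (η ω))
    (hGNZ : ∀ f : X → Measure X → ℝ≥0∞,
      Measurable (fun p : X × Measure X => f p.1 p.2) →
      ∫⁻ ω, ∫⁻ x, f x (η ω) ∂(η ω) ∂P
        = ∫⁻ ω, ∫⁻ x, f x (η ω + Measure.dirac x) * κ x (η ω) ∂lam ∂P)
    (B : Set X) (hB : MeasurableSet B) (hfinB : ∀ᵐ ω ∂P, η ω B < ⊤) :
    ∫⁻ ω, partitionZ κ lam B (η ω) ∂P
      = ∫⁻ ω, (if η ω B = ⊤ then (⊤ : ℝ≥0∞) else (2 : ℝ≥0∞) ^ enat (η ω B)) ∂P := by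
  haveI hSF : SigmaFinite lam := ⟨⟨⟨Bseq, fun _ => trivial, fun j => (hlam j).lt_top, hloc.2.2⟩⟩⟩
  have hmeasB : Measurable fun ω => η ω B := (Measure.measurable_coe hB).comp hηmeas
  have hKm : ∀ m : ℕ, Measurable fun ω => ∫⁻ v : Fin m → X, kappaFin κ v (η ω)
      ∂(Measure.pi fun _ : Fin m => lam.restrict B) :=
    fun m => (measurable_K hκmeas (lam.restrict B) m).comp hηmeas
  have hTm : ∀ m : ℕ, ∫⁻ ω, ∫⁻ v : Fin m → X, kappaFin κ v (η ω)
        ∂(Measure.pi fun _ : Fin m => lam.restrict B) ∂P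
      = ∫⁻ ω, ∏ k ∈ Finset.range m, (η ω B - (k : ℝ≥0∞)) ∂P := by
    intro m
    have h := T_formula P lam κ hκmeas η hηmeas hGNZ B hB m (fun _ => 1) measurable_const
    simpa using h
  have hprodmeas : ∀ m : ℕ, Measurable fun ω => ∏ k ∈ Finset.range m, (η ω B - (k : ℝ≥0∞)) :=
    fun m => Finset.measurable_prod _ fun k _ => hmeasB.sub measurable_const
  have hLHS : ∫⁻ ω, partitionZ κ lam B (η ω) ∂P
      = 1 + ∑' m : ℕ, (((m + 1).factorial : ℝ≥0∞))⁻¹ * ∫⁻ ω, ∫⁻ v : Fin (m+1) → X,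
          kappaFin κ v (η ω) ∂(Measure.pi fun _ : Fin (m+1) => lam.restrict B) ∂P := by
    simp only [partitionZ]
    rw [lintegral_add_left measurable_const, lintegral_one, measure_univ]
    congr 1
    rw [lintegral_tsum fun m => ((hKm (m+1)).const_mul _).aemeasurable]
    refine tsum_congr fun m => ?_
    rw [lintegral_const_mul _ (hKm (m+1))]
  have hRHSsum : ∫⁻ ω, (1 + ∑' m : ℕ, (((m + 1).factorial : ℝ≥0∞))⁻¹ *
        ∏ k ∈ Finset.range (m+1), (η ω B - (k : ℝ≥0∞))) ∂P
      = 1 + ∑' m : ℕ, (((m + 1).factorial : ℝ≥0∞))⁻¹ *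
          ∫⁻ ω, ∏ k ∈ Finset.range (m+1), (η ω B - (k : ℝ≥0∞)) ∂P := by
    rw [lintegral_add_left measurable_const, lintegral_one, measure_univ]
    congr 1
    rw [lintegral_tsum fun m => ((hprodmeas (m+1)).const_mul _).aemeasurable]
    refine tsum_congr fun m => ?_
    rw [lintegral_const_mul _ (hprodmeas (m+1))]
  have hmid : ∫⁻ ω, partitionZ κ lam B (η ω) ∂P
      = ∫⁻ ω, (1 + ∑' m : ℕ, (((m + 1).factorial : ℝ≥0∞))⁻¹ *
          ∏ k ∈ Finset.range (m+1), (η ω B - (k : ℝ≥0∞))) ∂P := by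
    rw [hLHS, hRHSsum]
    congr 1
    exact tsum_congr fun m => by rw [hTm (m+1)]
  rw [hmid]
  refine lintegral_congr_ae ?_
  filter_upwards [eta_nat P lam κ η hηmeas hGNZ B hB hfinB] with ω hω
  obtain ⟨n, hn⟩ := hω
  rw [hn, key_sum n, if_neg (ENNReal.natCast_ne_top n)]
  have henat : enat ((n : ℝ≥0∞)) = n := by
    simp [Gibbs.enat]
  rw [henat]


end Gibbs
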